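/- If F is a free group of rank n ≥ 2 and H ≤ F is a subgroup of finite index d, then H is a free group of rank d(n − 1) + 1. -/

import Mathlib

open Quiver

namespace NSaux

variable {V : Type*} [Quiver V] [Arborescence V]

lemma no_two_cycle {a b : V} (e : a ⟶ b) (f : b ⟶ a) : False := by
  have h1 : ((default : Path (root V) a).cons e) = (default : Path (root V) b) :=
    (Unique.eq_default _)
  have h2 : ((default : Path (root V) b).cons f) = (default : Path (root V) a) :=
    (Unique.eq_default _)
  have l1 := congrArg Path.length h1
  have l2 := congrArg Path.length h2
  simp [Path.length_cons] at l1 l2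
  omega

lemma not_arrow_root {a : V} (e : a ⟶ root V) : False := by
  exact Path.cons_ne_nil _ _
    (Subsingleton.elim (((default : Path (root V) a).cons e)) (Path.nil))

/-- In an arborescence, arrows biject with non-root vertices via the target map. -/
noncomputable def totalEquivNonRoot : Total V ≃ {b : V // b ≠ root V} := by
  refine Equiv.ofBijective
    (fun t => ⟨t.right, fun h => not_arrow_root (h ▸ t.hom)⟩) ⟨?_, ?_⟩
  · rintro ⟨a, b, e⟩ ⟨a', b', e'⟩ h
    simp only [Subtype.mk.injEq] at h
    subst h
    have h1 : ((default : Path (root V) a).cons e) = ((default : Path (root V) a').cons e') := by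
      rw [Unique.eq_default ((default : Path (root V) a).cons e),
        Unique.eq_default ((default : Path (root V) a').cons e')]
    obtain rfl := Path.obj_eq_of_cons_eq_cons h1
    have h3 := Path.hom_heq_of_cons_eq_cons h1
    rw [Total.mk.injEq]
    exact ⟨rfl, rfl, h3⟩
  · rintro ⟨b, hb⟩
    have p : Path (root V) b := default
    cases p with
    | nil => exact absurd rfl hb
    | cons p e => exact ⟨⟨_, b, e⟩, rfl⟩

end NSaux

section Sym

variable {W : Type u} [Quiver.{v} W] (T : WideSubquiver (Symmetrify W))

/-- Arrows of the wide subquiver `T` of the symmetrification biject with arrows of `W`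
lying in the symmetrified subquiver, provided `T` is an arborescence. -/
noncomputable def totalSubEquiv [Arborescence (↥T)] :
    Total (↥T) ≃ {t : Total W // t.hom ∈ wideSubquiverSymmetrify T t.left t.right} := by
  refine Equiv.ofBijective (fun t =>
    match t with
    | ⟨a, b, ⟨Sum.inl e, he⟩⟩ => ⟨⟨a, b, e⟩, Or.inl he⟩
    | ⟨a, b, ⟨Sum.inr e, he⟩⟩ => ⟨⟨(b : W), (a : W), e⟩, Or.inr he⟩) ⟨?_, ?_⟩
  · rintro ⟨a, b, ⟨e | e, he⟩⟩ ⟨a', b', ⟨e' | e', he'⟩⟩ h <;>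
      simp only [Subtype.mk.injEq, Total.mk.injEq] at h
    · obtain ⟨rfl, rfl, h3⟩ := h
      rfl
    · obtain ⟨rfl, rfl, h3⟩ := h
      exact absurd he' (fun he' => NSaux.no_two_cycle (V := ↥T)
        (show (a : ↥T) ⟶ (b : ↥T) from ⟨Sum.inl e, he⟩)
        (show (b : ↥T) ⟶ (a : ↥T) from ⟨Sum.inr e, he'⟩))
    · obtain ⟨rfl, rfl, h3⟩ := h
      exact absurd he' (fun he' => NSaux.no_two_cycle (V := ↥T)
        (show (a : ↥T) ⟶ (b : ↥T) from ⟨Sum.inr e, he⟩)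
        (show (b : ↥T) ⟶ (a : ↥T) from ⟨Sum.inl e, he'⟩))
    · obtain ⟨rfl, rfl, h3⟩ := h
      rfl
  · rintro ⟨⟨a, b, e⟩, he | he⟩
    · exact ⟨⟨a, b, ⟨Sum.inl e, he⟩⟩, rfl⟩
    · exact ⟨⟨b, a, ⟨Sum.inr e, he⟩⟩, rfl⟩

end Sym

noncomputable section EndBasis

open CategoryTheory CategoryTheory.SingleObj Quiver IsFreeGroupoid IsFreeGroupoid.SpanningTree

variable {G : Type u} [Groupoid.{u} G] [IsFreeGroupoid G]
  (T : WideSubquiver (Symmetrify <| Generators G)) [Arborescence T]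

/-- The root of `T`, as an element of `G`. -/
def rootG : G := show T from root T

@[simp] lemma treeHom_rootG : treeHom T (rootG T) = 𝟙 _ :=
  (treeHom_eq T Path.nil).trans rfl

/-- The vertex group at the root is free, with an explicit basis indexed by the edges
outside the spanning tree. This is `IsFreeGroupoid.SpanningTree.endIsFree` upgraded to
a `FreeGroupBasis`. -/
def endBasis : FreeGroupBasis
    ((wideSubquiverEquivSetTotal <| wideSubquiverSymmetrify T)ᶜ : Set _)
    (CategoryTheory.End (rootG T)) :=
  FreeGroupBasis.ofUniqueLift ((wideSubquiverEquivSetTotal <| wideSubquiverSymmetrify T)ᶜ : Set _)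
    (fun e => loopOfHom T (of e.val.hom))
    (by
      classical
      intro X _ f
      let f' : Labelling (Generators G) X := fun a b e =>
        if h : e ∈ wideSubquiverSymmetrify T a b then 1 else f ⟨⟨a, b, e⟩, h⟩
      rcases unique_lift f' with ⟨F', hF', uF'⟩
      refine ⟨F'.mapEnd _, ?_, ?_⟩
      · suffices ∀ {x y} (q : x ⟶ y), F'.map (loopOfHom T q) = (F'.map q : X) by
          rintro ⟨⟨a, b, e⟩, h⟩
          erw [Functor.mapEnd_apply, this, hF']
          exact dif_neg h
        intros x y q
        suffices ∀ {a} (p : Path (root T) a), F'.map (homOfPath T p) = 1 by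
          simp only [this, treeHom, comp_as_mul, inv_as_inv, loopOfHom, inv_one, mul_one,
            one_mul, Functor.map_inv, Functor.map_comp]
          erw [this, inv_one, one_mul, this, mul_one]
        intro a p
        induction' p with b c p e ih
        · exact F'.map_id _
        change F'.map (homOfPath T p ≫ _) = 1
        erw [F'.map_comp, comp_as_mul, ih, mul_one]
        rcases e with ⟨e | e, eT⟩
        · dsimp only
          erw [hF']
          exact dif_pos (Or.inl eT)
        · dsimp only
          erw [F'.map_inv, inv_as_inv, inv_eq_one, hF']
          exact dif_pos (Or.inr eT)
      · intro E hE
        ext x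
        have key : (functorOfMonoidHom T E).map x = F'.map x := by
          congr
          apply uF'
          intro a b e
          change E (loopOfHom T _) = dite _ _ _
          split_ifs with h
          · rw [loopOfHom_eq_id T e h, ← CategoryTheory.End.one_def]; exact E.map_one
          · exact hE ⟨⟨a, b, e⟩, h⟩
        have hx : loopOfHom T x = x := by
          simp only [loopOfHom, treeHom_rootG]
          exact (show 𝟙 (rootG T) ≫ x ≫ inv (𝟙 (rootG T)) = x by simp)
        exact ((congrArg E hx).symm.trans key :))

end EndBasis

noncomputable section ActionCount

open CategoryTheory CategoryTheory.ActionCategory IsFreeGroupoid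

variable {G : Type u} [Group G] [IsFreeGroup G] {A : Type u} [MulAction G A]

/-- The arrows of the generating quiver of the action groupoid biject with
(generator, point) pairs. -/
def totalActionEquiv :
    Total (Generators (ActionCategory G A)) ≃ (IsFreeGroup.Generators G × A) := by
  refine Equiv.ofBijective (fun t => (t.hom.val, (show ActionCategory G A from t.left).back))
    ⟨?_, ?_⟩
  · rintro ⟨a, b, ⟨e, he⟩⟩ ⟨a', b', ⟨e', he'⟩⟩ h
    simp only [Prod.mk.injEq] at h
    obtain ⟨rfl, hab⟩ := h
    obtain rfl : a = a' := by
      have := (ActionCategory.back_coe (show ActionCategory G A from a)).symm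
      rw [hab] at this
      exact this.trans (ActionCategory.back_coe _)
    obtain rfl : b = b' := by
      have hb : (show ActionCategory G A from b).back = (show ActionCategory G A from b').back :=
        he.symm.trans he'
      have := (ActionCategory.back_coe (show ActionCategory G A from b)).symm
      rw [hb] at this
      exact this.trans (ActionCategory.back_coe _)
    rfl
  · rintro ⟨e, x⟩
    refine ⟨⟨show Generators (ActionCategory G A) from ((x : ActionCategory G A)),
      show Generators (ActionCategory G A) from ((IsFreeGroup.of e • x : A) : ActionCategory G A),
      ⟨e, ?_⟩⟩, ?_⟩
    · rw [ActionCategory.coe_back, ActionCategory.coe_back]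
    · show (e, ActionCategory.back (x : ActionCategory G A)) = (e, x)
      rw [ActionCategory.coe_back]

end ActionCount
section Main

open Quiver CategoryTheory CategoryTheory.ActionCategory IsFreeGroupoid

lemma NSaux.card_nonRoot {V : Type*} [Quiver V] [Arborescence V] [Finite V] :
    Nat.card {b : V // b ≠ root V} + 1 = Nat.card V := by
  have h := Set.ncard_add_ncard_compl ({root V} : Set V)
  rw [Set.ncard_singleton] at h
  have h2 : Nat.card {b : V // b ≠ root V} = ({root V}ᶜ : Set V).ncard := by
    rw [← Nat.card_coe_set_eq]
    exact Nat.card_congr (Equiv.subtypeEquivRight (fun b => by simp))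
  omega

/-- Nielsen–Schreier with the index formula: a subgroup of index d of a free group
of rank n ≥ 2 is free of rank d(n-1)+1. -/
theorem stmt_15 (n d : ℕ) (hn : 2 ≤ n) (H : Subgroup (FreeGroup (Fin n)))
    (hd : H.index = d) (hfin : H.FiniteIndex) :
    Nonempty (H ≃* FreeGroup (Fin (d * (n - 1) + 1))) := by
  classical
  let Gn := FreeGroup (Fin n)
  let A := Gn ⧸ H
  haveI : Finite A := H.finite_quotient_of_finiteIndex
  have cA : Nat.card A = d := by rw [← hd]; rfl
  have hd1 : 1 ≤ d := by
    have := hfin.index_ne_zero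
    omega
  let r : ActionCategory Gn A := objEquiv Gn A ((1 : Gn) : A)
  letI : RootedConnected (show Symmetrify (Generators (ActionCategory Gn A)) from r) :=
    ⟨fun b => IsFreeGroupoid.path_nonempty_of_hom
      (@CategoryTheory.nonempty_hom_of_preconnected_groupoid _ _ (by exact (inferInstance : IsPreconnected (ActionCategory Gn A))) r b)⟩
  let T : WideSubquiver (Symmetrify (Generators (ActionCategory Gn A))) :=
    geodesicSubtree (show Symmetrify (Generators (ActionCategory Gn A)) from r)
  letI instArb : Arborescence (↥T) := geodesicArborescence (show Symmetrify (Generators (ActionCategory Gn A)) from r)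
  let W := Generators (ActionCategory Gn A)
  let S : Set (Total W) := wideSubquiverEquivSetTotal (wideSubquiverSymmetrify T)
  -- finiteness
  have egen : Fin n ≃ IsFreeGroup.Generators Gn :=
    Equiv.ofFreeGroupEquiv (IsFreeGroup.toFreeGroup Gn)
  haveI : Finite (IsFreeGroup.Generators Gn) := Finite.of_equiv _ egen
  have eTot : Total W ≃ (IsFreeGroup.Generators Gn × A) := totalActionEquiv
  haveI : Finite (Total W) := Finite.of_equiv _ eTot.symm
  haveI finT : Finite (↥T) := Finite.of_equiv A (objEquiv Gn A)
  -- cardinalities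
  have cTot : Nat.card (Total W) = n * d := by
    rw [Nat.card_congr eTot, Nat.card_prod, Nat.card_congr egen.symm, cA,
      Nat.card_eq_fintype_card, Fintype.card_fin]
  have cVT : Nat.card (↥T) = d := by
    have e2 : (↥T) ≃ A := (objEquiv Gn A).symm
    exact (Nat.card_congr e2).trans cA
  have cS : Nat.card (↥S) + 1 = d := by
    have e1 : (↥S) ≃ Total (↥T) :=
      ((Equiv.subtypeEquivRight (fun t => Iff.rfl)).trans (totalSubEquiv T).symm)
    rw [Nat.card_congr e1, Nat.card_congr (NSaux.totalEquivNonRoot (V := ↥T)), ← cVT]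
    exact NSaux.card_nonRoot
  have cSc : Nat.card (↥(Sᶜ)) = d * (n - 1) + 1 := by
    have h := Set.ncard_add_ncard_compl S
    rw [← Nat.card_coe_set_eq, ← Nat.card_coe_set_eq] at h
    rw [cTot] at h
    have hm : d * (n - 1) + d = d * n := by
      have h1 : n - 1 + 1 = n := by omega
      calc d * (n - 1) + d = d * ((n - 1) + 1) := by ring
        _ = d * n := by rw [h1]
    have hcomm : n * d = d * n := Nat.mul_comm n d
    omega
  haveI : Fintype (↥(Sᶜ)) := Fintype.ofFinite _
  have efin : (↥(Sᶜ)) ≃ Fin (d * (n - 1) + 1) :=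
    Fintype.equivFinOfCardEq (by rw [← Nat.card_eq_fintype_card, cSc])
  let b := endBasis T
  have hroot : rootG T = r := rfl
  exact ⟨(endMulEquivSubgroup H).symm.trans
    (show CategoryTheory.End r ≃* FreeGroup (Fin (d * (n - 1) + 1)) from (b.reindex efin).repr)⟩

end Main
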